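/- Let s : ℕ → (0,∞) and let γ assign to each finite subset of ℕ a positive real number. For a multi-index j define a_j := γ(supp(j))⁻¹ · ∏_{k ∈ supp(j)} 2^{2 s_k j_k}. Then for every multi-index i, a_i · ∑_{j ≥ i} a_j⁻¹ ≥ ∏_{k ∈ supp(i)} (1 − 2^{−2 s_k})⁻¹, where the sum on the left runs over all multi-indices j with j_k ≥ i_k for all k and is taken in [0,∞]. In particular, if sup_i ( a_i · ∑_{j ≥ i} a_j⁻¹ ) < ∞, then ∑_{k∈ℕ} 2^{−2 s_k} < ∞. -/

import Mathlib

open scoped ENNReal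

/-- The Sobolev-type tensor product weights of Section 4:
`a_j = γ(supp j)⁻¹ ∏_{k ∈ supp j} 2^{2 s_k j_k}`. -/
noncomputable def sobolevWeight (s : ℕ → ℝ) (γ : Finset ℕ → ℝ) (j : ℕ →₀ ℕ) : ℝ :=
  (γ j.support)⁻¹ * ∏ k ∈ j.support, (2 : ℝ) ^ (2 * s k * (j k : ℝ))

namespace Stmt11Aux

/-- The equivalence `ℕ × {ν // supp ν ⊆ F} ≃ {μ // supp μ ⊆ cons a F}`. -/
noncomputable def consEquiv (a : ℕ) (F : Finset ℕ) (ha : a ∉ F) :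
    ℕ × {ν : ℕ →₀ ℕ // ν.support ⊆ F} ≃ {μ : ℕ →₀ ℕ // μ.support ⊆ Finset.cons a F ha} where
  toFun p := ⟨Finsupp.single a p.1 + (p.2 : ℕ →₀ ℕ), by
    refine (Finsupp.support_add).trans ?_
    intro k hk
    rcases Finset.mem_union.mp hk with h | h
    · have := Finsupp.support_single_subset h
      simp only [Finset.mem_singleton] at this
      simp [this]
    · exact Finset.mem_cons.mpr (Or.inr (p.2.2 h))⟩
  invFun μ := ((μ : ℕ →₀ ℕ) a, ⟨(μ : ℕ →₀ ℕ).erase a, by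
    intro k hk
    rw [Finsupp.support_erase, Finset.mem_erase] at hk
    rcases Finset.mem_cons.mp (μ.2 hk.2) with h | h
    · exact absurd h hk.1
    · exact h⟩)
  left_inv p := by
    obtain ⟨n, ν, hν⟩ := p
    have hνa : ν a = 0 := Finsupp.notMem_support_iff.mp (fun h => ha (hν h))
    refine Prod.ext ?_ (Subtype.ext ?_)
    · simp [hνa]
    · ext k
      by_cases hk : k = a
      · subst hk; simp [hνa]
      · simp [Finsupp.erase_ne hk, Finsupp.single_apply, hk, Ne.symm hk]
  right_inv μ := Subtype.ext (Finsupp.single_add_erase a (μ : ℕ →₀ ℕ))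

lemma tsum_prod_eq (F : Finset ℕ) (G : ℕ → ℕ → ℝ≥0∞) :
    ∑' μ : {μ : ℕ →₀ ℕ // μ.support ⊆ F}, ∏ k ∈ F, G k ((μ : ℕ →₀ ℕ) k) =
      ∏ k ∈ F, ∑' n : ℕ, G k n := by
  induction F using Finset.cons_induction with
  | empty =>
    haveI : Unique {μ : ℕ →₀ ℕ // μ.support ⊆ (∅ : Finset ℕ)} :=
      ⟨⟨⟨0, by simp⟩⟩, by
        rintro ⟨μ, hμ⟩
        apply Subtype.ext
        ext k
        by_contra h
        exact absurd (hμ (Finsupp.mem_support_iff.mpr (by simpa using h))) (by simp)⟩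
    rw [tsum_eq_single (default : {μ : ℕ →₀ ℕ // μ.support ⊆ (∅ : Finset ℕ)})
      (fun b hb => absurd (Unique.eq_default b) hb)]
    simp
  | cons a F ha ih =>
    rw [← Equiv.tsum_eq (consEquiv a F ha), ENNReal.tsum_prod']
    have key : ∀ (n : ℕ) (ν : {ν : ℕ →₀ ℕ // ν.support ⊆ F}),
        ∏ k ∈ Finset.cons a F ha,
          G k (((consEquiv a F ha (n, ν) : {μ : ℕ →₀ ℕ // μ.support ⊆ Finset.cons a F ha})
            : ℕ →₀ ℕ) k)
          = G a n * ∏ k ∈ F, G k ((ν : ℕ →₀ ℕ) k) := by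
      intro n ν
      rw [Finset.prod_cons]
      have hνa : (ν : ℕ →₀ ℕ) a = 0 :=
        Finsupp.notMem_support_iff.mp (fun h => ha (ν.2 h))
      congr 1
      · simp [consEquiv, hνa]
      · refine Finset.prod_congr rfl fun k hk => ?_
        have hka : k ≠ a := fun h => ha (h ▸ hk)
        simp [consEquiv, Finsupp.single_apply, Ne.symm hka]
    calc ∑' (n : ℕ) (ν : {ν : ℕ →₀ ℕ // ν.support ⊆ F}),
          ∏ k ∈ Finset.cons a F ha,
            G k (((consEquiv a F ha (n, ν) : {μ : ℕ →₀ ℕ // μ.support ⊆ Finset.cons a F ha})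
              : ℕ →₀ ℕ) k)
        = ∑' (n : ℕ) (ν : {ν : ℕ →₀ ℕ // ν.support ⊆ F}),
            G a n * ∏ k ∈ F, G k ((ν : ℕ →₀ ℕ) k) := by
          congr 1; ext n; congr 1; ext ν; exact key n ν
      _ = (∑' n : ℕ, G a n) * ∑' ν : {ν : ℕ →₀ ℕ // ν.support ⊆ F},
            ∏ k ∈ F, G k ((ν : ℕ →₀ ℕ) k) := by
          simp_rw [ENNReal.tsum_mul_left]
          rw [ENNReal.tsum_mul_right]
      _ = ∏ k ∈ Finset.cons a F ha, ∑' n : ℕ, G k n := by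
          rw [Finset.prod_cons, ih]


lemma support_add_eq {i μ : ℕ →₀ ℕ} (hμ : μ.support ⊆ i.support) :
    (i + μ).support = i.support := by
  ext k
  simp only [Finsupp.mem_support_iff, Finsupp.add_apply]
  constructor
  · intro h
    by_contra hi
    have hik : i k = 0 := by simpa using hi
    have : μ k = 0 := by
      by_contra hm
      exact (Finsupp.mem_support_iff.mp (hμ (Finsupp.mem_support_iff.mpr hm))) hik
    omega
  · intro h; omega

lemma weight_pos (s : ℕ → ℝ) (γ : Finset ℕ → ℝ) (hγ : ∀ ω, 0 < γ ω) (j : ℕ →₀ ℕ) :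
    0 < sobolevWeight s γ j :=
  mul_pos (inv_pos.mpr (hγ _)) (Finset.prod_pos fun k _ => Real.rpow_pos_of_pos two_pos _)

lemma weight_mul (s : ℕ → ℝ) (γ : Finset ℕ → ℝ) (hγ : ∀ ω, 0 < γ ω)
    {i μ : ℕ →₀ ℕ} (hμ : μ.support ⊆ i.support) :
    sobolevWeight s γ i * (sobolevWeight s γ (i + μ))⁻¹ =
      ∏ k ∈ i.support, ((2 : ℝ) ^ (-(2 * s k))) ^ (μ k) := by
  unfold sobolevWeight
  rw [support_add_eq hμ, mul_inv, inv_inv]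
  rw [show ∀ a b c d : ℝ, a * b * (c * d) = (a * c) * (b * d) by intros; ring]
  rw [inv_mul_cancel₀ (hγ _).ne', one_mul, ← Finset.prod_inv_distrib, ← Finset.prod_mul_distrib]
  refine Finset.prod_congr rfl fun k hk => ?_
  rw [← Real.rpow_neg (by norm_num : (0:ℝ) ≤ 2), ← Real.rpow_add two_pos,
    ← Real.rpow_natCast ((2:ℝ) ^ (-(2 * s k))) (μ k),
    ← Real.rpow_mul (by norm_num : (0:ℝ) ≤ 2)]
  congr 1
  push_cast [Finsupp.add_apply]
  ring

end Stmt11Aux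

open Stmt11Aux in
/-- Section 4, necessity of the growth condition.
For the weights `a_j = γ(supp j)⁻¹ ∏_{k ∈ supp j} 2^{2 s_k j_k}` (with `s > 0`, `γ > 0`),
one has `a_i ∑_{j ≥ i} a_j⁻¹ ≥ ∏_{k ∈ supp i} (1 - 2^{-2 s_k})⁻¹` for every multi-index `i`
(sums taken in `[0,∞]`), and in particular, if `sup_i (a_i ∑_{j ≥ i} a_j⁻¹) < ∞` then
`∑_k 2^{-2 s_k} < ∞`. -/
theorem stmt11 (s : ℕ → ℝ) (hs : ∀ k, 0 < s k) (γ : Finset ℕ → ℝ) (hγ : ∀ ω, 0 < γ ω) :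
    (∀ i : ℕ →₀ ℕ,
      ENNReal.ofReal (∏ k ∈ i.support, (1 - (2 : ℝ) ^ (-(2 * s k)))⁻¹) ≤
        ENNReal.ofReal (sobolevWeight s γ i) *
          ∑' j : {j : ℕ →₀ ℕ // i ≤ j},
            ENNReal.ofReal ((sobolevWeight s γ (j : ℕ →₀ ℕ))⁻¹)) ∧
    ((⨆ i : ℕ →₀ ℕ, ENNReal.ofReal (sobolevWeight s γ i) *
          ∑' j : {j : ℕ →₀ ℕ // i ≤ j},
            ENNReal.ofReal ((sobolevWeight s γ (j : ℕ →₀ ℕ))⁻¹)) < ⊤ →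
      Summable fun k => (2 : ℝ) ^ (-(2 * s k))) := by
  set x : ℕ → ℝ := fun k => (2 : ℝ) ^ (-(2 * s k)) with hx
  have hx0 : ∀ k, 0 < x k := fun k => Real.rpow_pos_of_pos two_pos _
  have hx1 : ∀ k, x k < 1 := fun k =>
    Real.rpow_lt_one_of_one_lt_of_neg one_lt_two (by nlinarith [hs k])
  have h1x : ∀ k, 0 < 1 - x k := fun k => by linarith [hx1 k]
  have part1 : ∀ i : ℕ →₀ ℕ,
      ENNReal.ofReal (∏ k ∈ i.support, (1 - x k)⁻¹) ≤
        ENNReal.ofReal (sobolevWeight s γ i) *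
          ∑' j : {j : ℕ →₀ ℕ // i ≤ j},
            ENNReal.ofReal ((sobolevWeight s γ (j : ℕ →₀ ℕ))⁻¹) := by
    intro i
    calc ENNReal.ofReal (∏ k ∈ i.support, (1 - x k)⁻¹)
        = ∏ k ∈ i.support, (1 - ENNReal.ofReal (x k))⁻¹ := by
          rw [ENNReal.ofReal_prod_of_nonneg (fun k _ => (inv_pos.mpr (h1x k)).le)]
          refine Finset.prod_congr rfl fun k _ => ?_
          rw [ENNReal.ofReal_inv_of_pos (h1x k), ENNReal.ofReal_sub 1 (hx0 k).le,
            ENNReal.ofReal_one]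
      _ = ∏ k ∈ i.support, ∑' n : ℕ, (ENNReal.ofReal (x k)) ^ n := by
          refine Finset.prod_congr rfl fun k _ => ?_
          rw [ENNReal.tsum_geometric]
      _ = ∑' μ : {μ : ℕ →₀ ℕ // μ.support ⊆ i.support},
            ∏ k ∈ i.support, (ENNReal.ofReal (x k)) ^ ((μ : ℕ →₀ ℕ) k) :=
          (tsum_prod_eq i.support fun k n => (ENNReal.ofReal (x k)) ^ n).symm
      _ = ∑' μ : {μ : ℕ →₀ ℕ // μ.support ⊆ i.support},
            ENNReal.ofReal (sobolevWeight s γ i) *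
              ENNReal.ofReal ((sobolevWeight s γ (i + (μ : ℕ →₀ ℕ)))⁻¹) := by
          refine tsum_congr fun μ => ?_
          rw [← ENNReal.ofReal_mul (weight_pos s γ hγ i).le, weight_mul s γ hγ μ.2,
            ENNReal.ofReal_prod_of_nonneg (fun k _ => pow_nonneg (hx0 k).le _)]
          exact Finset.prod_congr rfl fun k _ => (ENNReal.ofReal_pow (hx0 k).le _).symm
      _ = ENNReal.ofReal (sobolevWeight s γ i) *
            ∑' μ : {μ : ℕ →₀ ℕ // μ.support ⊆ i.support},
              ENNReal.ofReal ((sobolevWeight s γ (i + (μ : ℕ →₀ ℕ)))⁻¹) :=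
          ENNReal.tsum_mul_left
      _ ≤ ENNReal.ofReal (sobolevWeight s γ i) *
            ∑' j : {j : ℕ →₀ ℕ // i ≤ j},
              ENNReal.ofReal ((sobolevWeight s γ (j : ℕ →₀ ℕ))⁻¹) := by
          refine mul_le_mul_right ?_ _
          refine Summable.tsum_le_tsum_of_inj
            (fun μ => ⟨i + (μ : ℕ →₀ ℕ), Finsupp.le_def.mpr fun k => Nat.le_add_right _ _⟩)
            (fun μ ν h => Subtype.ext (add_left_cancel (congrArg Subtype.val h)))
            (fun _ _ => zero_le) (fun μ => le_rfl) ENNReal.summable ENNReal.summable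
  refine ⟨part1, ?_⟩
  intro hC
  set C := ⨆ i : ℕ →₀ ℕ, ENNReal.ofReal (sobolevWeight s γ i) *
      ∑' j : {j : ℕ →₀ ℕ // i ≤ j},
        ENNReal.ofReal ((sobolevWeight s γ (j : ℕ →₀ ℕ))⁻¹) with hCdef
  have hexp : ∀ k, Real.exp (x k) ≤ (1 - x k)⁻¹ := by
    intro k
    have h2 : 1 - x k ≤ (Real.exp (x k))⁻¹ := by
      rw [← Real.exp_neg]
      have := Real.add_one_le_exp (-(x k)); linarith
    have h3 : (1 - x k) * Real.exp (x k) ≤ 1 := by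
      have := mul_le_mul_of_nonneg_right h2 (Real.exp_pos (x k)).le
      rwa [inv_mul_cancel₀ (Real.exp_pos (x k)).ne'] at this
    rw [show (1 - x k)⁻¹ = 1 / (1 - x k) from (one_div _).symm, le_div_iff₀ (h1x k), mul_comm]
    exact h3
  have key : ∀ F : Finset ℕ, ∑ k ∈ F, x k ≤ Real.log C.toReal := by
    intro F
    -- the multi-index with support F and constant value 1
    set iF : ℕ →₀ ℕ := ⟨F, fun k => if k ∈ F then 1 else 0, by intro a; simp⟩ with hiF
    have hsupp : iF.support = F := rfl
    have h1 := (part1 iF).trans (le_iSup (fun i : ℕ →₀ ℕ =>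
      ENNReal.ofReal (sobolevWeight s γ i) *
        ∑' j : {j : ℕ →₀ ℕ // i ≤ j},
          ENNReal.ofReal ((sobolevWeight s γ (j : ℕ →₀ ℕ))⁻¹)) iF)
    rw [hsupp] at h1
    have h2 : ∏ k ∈ F, (1 - x k)⁻¹ ≤ C.toReal :=
      (ENNReal.ofReal_le_iff_le_toReal hC.ne).mp h1
    have h3 : Real.exp (∑ k ∈ F, x k) ≤ C.toReal := by
      rw [Real.exp_sum]
      exact le_trans (Finset.prod_le_prod (fun k _ => (Real.exp_pos _).le)
        (fun k _ => hexp k)) h2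
    have hCt : 0 < C.toReal := lt_of_lt_of_le (Real.exp_pos _) h3
    exact (Real.le_log_iff_exp_le hCt).mpr h3
  exact summable_of_sum_le (fun k => (hx0 k).le) key
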